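/- Let (M,d) be a sequentially compact, chain-connected metric space and let f : M → ℝ be continuous. If f(w) < c < f(v) for some points w, v ∈ M and some real number c, then there exists u ∈ M with f(u) = c. -/
import Mathlib


/-- Intermediate value theorem for sequentially compact, chain-connected metric spaces. -/
theorem stmt0 {M : Type*} [MetricSpace M]
    (hseq : ∀ u : ℕ → M, ∃ x : M, ∃ φ : ℕ → ℕ, StrictMono φ ∧
      Filter.Tendsto (u ∘ φ) Filter.atTop (nhds x))
    (hchain : ∀ w v : M, ∀ ε : ℝ, 0 < ε → ∃ n : ℕ, ∃ x : ℕ → M,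
      x 0 = w ∧ x n = v ∧ ∀ i < n, dist (x i) (x (i + 1)) < ε)
    (f : M → ℝ) (hf : Continuous f)
    (w v : M) (c : ℝ) (h1 : f w < c) (h2 : c < f v) :
    ∃ u : M, f u = c := by
  by_contra hno
  push_neg at hno
  -- Step 1: a positive gap between the sublevel and superlevel sets
  have key : ∃ ε > 0, ∀ a b : M, f a < c → c < f b → ε ≤ dist a b := by
    by_contra h
    push_neg at h
    choose a b ha hb hd using fun n : ℕ =>
      h (1 / (n + 1)) (by positivity)
    obtain ⟨x, φ, hφ, hconv⟩ := hseq a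
    have hdist0 : Filter.Tendsto (fun n => dist ((a ∘ φ) n) ((b ∘ φ) n))
        Filter.atTop (nhds 0) := by
      apply squeeze_zero (fun n => dist_nonneg) (g := fun n : ℕ => 1 / ((n : ℝ) + 1))
      · intro n
        have h1 : dist (a (φ n)) (b (φ n)) < 1 / (φ n + 1) := hd (φ n)
        have h2 : (1 : ℝ) / (φ n + 1) ≤ 1 / (n + 1) := by
          apply one_div_le_one_div_of_le (by positivity)
          have h3 : (n : ℝ) ≤ φ n := Nat.cast_le.mpr hφ.le_apply
          linarith
        exact le_trans h1.le h2
      · exact tendsto_one_div_add_atTop_nhds_zero_nat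
    have hbconv : Filter.Tendsto (b ∘ φ) Filter.atTop (nhds x) :=
      hconv.congr_dist hdist0
    have hfa : Filter.Tendsto (fun n => f ((a ∘ φ) n)) Filter.atTop (nhds (f x)) :=
      (hf.tendsto x).comp hconv
    have hfb : Filter.Tendsto (fun n => f ((b ∘ φ) n)) Filter.atTop (nhds (f x)) :=
      (hf.tendsto x).comp hbconv
    have hle : f x ≤ c :=
      le_of_tendsto hfa (Filter.Eventually.of_forall fun n => (ha (φ n)).le)
    have hge : c ≤ f x :=
      ge_of_tendsto hfb (Filter.Eventually.of_forall fun n => (hb (φ n)).le)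
    exact hno x (le_antisymm hle hge)
  obtain ⟨ε, hε, hkey⟩ := key
  obtain ⟨n, x, hx0, hxn, hstep⟩ := hchain w v ε hε
  -- Step 2: find a crossing in the chain
  have hPn : c < f (x n) := hxn ▸ h2
  have hP0 : f (x 0) < c := hx0 ▸ h1
  classical
  have hEx : ∃ i, c < f (x i) := ⟨n, hPn⟩
  set i := Nat.find hEx with hi
  have hPi : c < f (x i) := Nat.find_spec hEx
  have hipos : 0 < i := by
    rcases Nat.eq_zero_or_pos i with h | h
    · exact absurd (h ▸ hPi) (not_lt.mpr hP0.le)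
    · exact h
  have hiln : i ≤ n := Nat.find_le hPn
  have hprev : f (x (i - 1)) < c := by
    have hnot : ¬ c < f (x (i - 1)) := Nat.find_min hEx (Nat.sub_lt hipos one_pos)
    rcases lt_or_eq_of_le (not_lt.mp hnot) with h | h
    · exact h
    · exact absurd h (hno _)
  have hlt : i - 1 < n := by omega
  have hd := hstep (i - 1) hlt
  rw [Nat.sub_add_cancel hipos] at hd
  exact absurd hd (not_lt.mpr (hkey _ _ hprev hPi))
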